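/- Let p(s) = s^5 + α1·s^4 + α2·s^3 + α3·s^2 + α4·s + α5 be a monic real polynomial of degree five. If α5 - α1·α4 ≥ 0, then p is Hurwitz unstable, i.e., p has a complex root with nonnegative real part. Equivalently, if p is Hurwitz stable then α5 < α1·α4. -/

import Mathlib

open Polynomial

namespace UnstableDeg5Aux

open Complex

lemma pop_card {M : Multiset ℂ} {n : ℕ} (h : Multiset.card M = n + 1) :
    ∃ a M', M = a ::ₘ M' ∧ Multiset.card M' = n := by
  have hne : M ≠ 0 := by
    intro h0; rw [h0] at h; simp at h
  obtain ⟨a, ha⟩ := Multiset.exists_mem_of_ne_zero hne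
  obtain ⟨M', rfl⟩ := Multiset.exists_cons_of_mem ha
  exact ⟨a, M', rfl, by simpa using h⟩

lemma extract_pair {M : Multiset ℂ} (h : M.map (starRingEnd ℂ) = M) {x : ℂ}
    (hx : x ∈ M) (hxim : x.im ≠ 0) :
    ∃ M', M = x ::ₘ (starRingEnd ℂ) x ::ₘ M' ∧ M'.map (starRingEnd ℂ) = M'
      ∧ Multiset.card M' + 2 = Multiset.card M := by
  have hne : (starRingEnd ℂ) x ≠ x := by
    intro he
    exact hxim ((Complex.conj_eq_iff_im).mp he)
  have hcx : (starRingEnd ℂ) x ∈ M.erase x := by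
    rw [Multiset.mem_erase_of_ne hne]
    rw [← h]; exact Multiset.mem_map_of_mem _ hx
  have hinj : Function.Injective (starRingEnd ℂ) := (starRingEnd ℂ).injective
  refine ⟨(M.erase x).erase ((starRingEnd ℂ) x), ?_, ?_, ?_⟩
  · rw [Multiset.cons_erase hcx, Multiset.cons_erase hx]
  · rw [Multiset.map_erase _ hinj, Multiset.map_erase _ hinj, h]
    rw [Complex.conj_conj]
    exact (Multiset.erase_comm M x ((starRingEnd ℂ) x)).symm
  · have h2 : 0 < Multiset.card (M.erase x) :=
      Multiset.card_pos_iff_exists_mem.mpr ⟨(starRingEnd ℂ) x, hcx⟩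
    have h3 := Multiset.card_erase_of_mem hx
    have h4 := Multiset.card_erase_of_mem hcx
    have h1 : 0 < Multiset.card M := Multiset.card_pos_iff_exists_mem.mpr ⟨x, hx⟩
    simp only [Nat.pred_eq_sub_one] at h3 h4
    omega

lemma decomp (M : Multiset ℂ) (hcard : Multiset.card M = 5)
    (hconj : M.map (starRingEnd ℂ) = M) :
    ∃ x1 x2 y1 y2 a : ℂ, M = {x1, x2, y1, y2, a} ∧ a.im = 0 ∧
      (x1 + x2).im = 0 ∧ (x1 * x2).im = 0 ∧ (y1 + y2).im = 0 ∧ (y1 * y2).im = 0 := by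
  by_cases h1 : ∃ x ∈ M, x.im ≠ 0
  · obtain ⟨x, hx, hxim⟩ := h1
    obtain ⟨M', hM', hconj', hcard'⟩ := extract_pair hconj hx hxim
    have hc3 : Multiset.card M' = 3 := by omega
    by_cases h2 : ∃ y ∈ M', y.im ≠ 0
    · obtain ⟨y, hy, hyim⟩ := h2
      obtain ⟨M'', hM'', hconj'', hcard''⟩ := extract_pair hconj' hy hyim
      have hc1 : Multiset.card M'' = 1 := by omega
      obtain ⟨a, rfl⟩ := Multiset.card_eq_one.mp hc1
      have haim : a.im = 0 := by
        have := hconj''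
        simp only [Multiset.map_singleton, Multiset.singleton_inj] at this
        exact (Complex.conj_eq_iff_im).mp this
      refine ⟨x, (starRingEnd ℂ) x, y, (starRingEnd ℂ) y, a, ?_, haim, ?_, ?_, ?_, ?_⟩
      · rw [hM', hM'']; rfl
      · simp
      · simp [Complex.mul_im]; ring
      · simp
      · simp [Complex.mul_im]; ring
    · push_neg at h2
      obtain ⟨b, c, d, rfl⟩ := Multiset.card_eq_three.mp hc3
      have hb : b.im = 0 := h2 b (by simp)
      have hc : c.im = 0 := h2 c (by simp)
      have hd : d.im = 0 := h2 d (by simp)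
      refine ⟨x, (starRingEnd ℂ) x, b, c, d, ?_, hd, ?_, ?_, ?_, ?_⟩
      · rw [hM']; rfl
      · simp
      · simp [Complex.mul_im]; ring
      · simp [Complex.add_im, hb, hc]
      · simp [Complex.mul_im, hb, hc]
  · push_neg at h1
    obtain ⟨a, M1, rfl, hc1⟩ := pop_card (n := 4) hcard
    obtain ⟨b, M2, rfl, hc2⟩ := pop_card (n := 3) hc1
    obtain ⟨c, M3, rfl, hc3⟩ := pop_card (n := 2) hc2
    obtain ⟨d, M4, rfl, hc4⟩ := pop_card (n := 1) hc3
    obtain ⟨e, rfl⟩ := Multiset.card_eq_one.mp hc4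
    have ha : a.im = 0 := h1 a (by simp)
    have hb : b.im = 0 := h1 b (by simp)
    have hc : c.im = 0 := h1 c (by simp)
    have hd : d.im = 0 := h1 d (by simp)
    have he : e.im = 0 := h1 e (by simp)
    refine ⟨a, b, c, d, e, rfl, he, ?_, ?_, ?_, ?_⟩
    · simp [Complex.add_im, ha, hb]
    · simp [Complex.mul_im, ha, hb]
    · simp [Complex.add_im, hc, hd]
    · simp [Complex.mul_im, hc, hd]

lemma pair_prod_pos {x1 x2 : ℂ} (h1 : x1.re < 0) (h2 : x2.re < 0)
    (hs : (x1 + x2).im = 0) : 0 < (x1 * x2).re := by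
  simp only [Complex.add_im, Complex.mul_re] at *
  have h2im : x2.im = -x1.im := by linarith
  rw [h2im]
  nlinarith [sq_nonneg x1.im, mul_pos (neg_pos.mpr h1) (neg_pos.mpr h2)]

lemma key_ineq {A B Cv D E a1 a4 a5 : ℝ} (hA : A < 0) (hB : B < 0) (hD : D < 0)
    (hC : 0 < Cv) (hE : 0 < E)
    (r1 : a1 = -(A + B + D))
    (r4 : a4 = Cv * E + A * (Cv * D + E * B))
    (r5 : a5 = -(A * (Cv * E))) :
    a5 - a1 * a4 < 0 := by
  subst r1 r4 r5
  nlinarith [mul_pos (mul_pos (mul_pos (neg_pos.mpr hA) (neg_pos.mpr hA)) hC) (neg_pos.mpr hD),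
    mul_pos (mul_pos (mul_pos (neg_pos.mpr hA) (neg_pos.mpr hA)) hE) (neg_pos.mpr hB),
    mul_pos (mul_pos (mul_pos (neg_pos.mpr hA) (neg_pos.mpr hB)) hC) (neg_pos.mpr hD),
    mul_pos (mul_pos (mul_pos (neg_pos.mpr hA) (neg_pos.mpr hB)) (neg_pos.mpr hB)) hE,
    mul_pos (mul_pos (neg_pos.mpr hB) hC) hE,
    mul_pos (mul_pos (neg_pos.mpr hA) (mul_pos (neg_pos.mpr hD) (neg_pos.mpr hD))) hC,
    mul_pos (mul_pos (mul_pos (neg_pos.mpr hA) (neg_pos.mpr hD)) hE) (neg_pos.mpr hB),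
    mul_pos (mul_pos (neg_pos.mpr hD) hC) hE]

end UnstableDeg5Aux

theorem unstable_deg5_of_ineq (α1 α2 α3 α4 α5 : ℝ)
    (h : 0 ≤ α5 - α1 * α4) :
    ∃ z : ℂ, aeval z (X ^ 5 + C α1 * X ^ 4 + C α2 * X ^ 3 + C α3 * X ^ 2
        + C α4 * X + C α5) = 0 ∧ 0 ≤ z.re := by
  by_contra hcon
  push_neg at hcon
  set Q : ℂ[X] := X ^ 5 + C (α1:ℂ) * X ^ 4 + C (α2:ℂ) * X ^ 3 + C (α3:ℂ) * X ^ 2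
      + C (α4:ℂ) * X + C (α5:ℂ) with hQ
  have haeval : ∀ z : ℂ, aeval z (X ^ 5 + C α1 * X ^ 4 + C α2 * X ^ 3 + C α3 * X ^ 2
      + C α4 * X + C α5) = Q.eval z := by
    intro z
    simp [hQ]
  have hroots_neg : ∀ z : ℂ, Q.eval z = 0 → z.re < 0 := by
    intro z hz
    have := hcon z
    rw [haeval z] at this
    exact this hz
  have hdeg : Q.natDegree = 5 := by unfold Q; compute_degree!
  have hmonic : Q.Monic := by
    unfold Monic leadingCoeff
    rw [hdeg]
    unfold Q
    simp [coeff_X_pow, coeff_C]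
  have hQne : Q ≠ 0 := hmonic.ne_zero
  have hsplits : Q.Splits := IsAlgClosed.splits Q
  have hcard : Multiset.card Q.roots = 5 := by
    rw [(splits_iff_card_roots).mp hsplits, hdeg]
  have hprod : Q = (Q.roots.map fun z => X - C z).prod :=
    hsplits.eq_prod_roots_of_monic hmonic
  have hconj : Q.roots.map (starRingEnd ℂ) = Q.roots := by
    have h1 : (Q.map (starRingEnd ℂ)).roots = Q.roots.map (starRingEnd ℂ) :=
      hsplits.roots_map _
    rw [← h1]
    congr 1
    unfold Q
    simp [Polynomial.map_add, Polynomial.map_mul, Polynomial.map_pow, map_C, map_X,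
      Complex.conj_ofReal]
  obtain ⟨x1, x2, y1, y2, a, hM, haim, hxs, hxp, hys, hyp⟩ :=
    UnstableDeg5Aux.decomp Q.roots hcard hconj
  -- all five have negative real part
  have hmem : ∀ z ∈ Q.roots, z.re < 0 := by
    intro z hz
    exact hroots_neg z ((mem_roots hQne).mp hz)
  have hx1 : x1.re < 0 := hmem x1 (by rw [hM]; simp)
  have hx2 : x2.re < 0 := hmem x2 (by rw [hM]; simp)
  have hy1 : y1.re < 0 := hmem y1 (by rw [hM]; simp)
  have hy2 : y2.re < 0 := hmem y2 (by rw [hM]; simp)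
  have ha : a.re < 0 := hmem a (by rw [hM]; simp)
  -- Vieta via explicit expansion
  have hQeq : Q = X^5 - C (x1 + x2 + (y1 + y2) + a) * X^4
        + C (x1*x2 + (x1+x2)*(y1+y2) + y1*y2 + a*(x1+x2+(y1+y2))) * X^3
        - C (x1*x2*(y1+y2) + y1*y2*(x1+x2) + a*(x1*x2 + (x1+x2)*(y1+y2) + y1*y2)) * X^2
        + C (x1*x2*(y1*y2) + a*(x1*x2*(y1+y2) + y1*y2*(x1+x2))) * X
        - C (a*(x1*x2*(y1*y2))) := by
    rw [hprod, hM]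
    simp only [Multiset.insert_eq_cons, Multiset.map_cons, Multiset.map_singleton,
      Multiset.prod_cons, Multiset.prod_singleton]
    simp only [C_add, C_mul]
    ring
  rw [hQ] at hQeq
  have coeffext : ∀ n : ℕ, (X ^ 5 + C (α1:ℂ) * X ^ 4 + C (α2:ℂ) * X ^ 3 + C (α3:ℂ) * X ^ 2
      + C (α4:ℂ) * X + C (α5:ℂ)).coeff n = (X^5 - C (x1 + x2 + (y1 + y2) + a) * X^4
        + C (x1*x2 + (x1+x2)*(y1+y2) + y1*y2 + a*(x1+x2+(y1+y2))) * X^3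
        - C (x1*x2*(y1+y2) + y1*y2*(x1+x2) + a*(x1*x2 + (x1+x2)*(y1+y2) + y1*y2)) * X^2
        + C (x1*x2*(y1*y2) + a*(x1*x2*(y1+y2) + y1*y2*(x1+x2))) * X
        - C (a*(x1*x2*(y1*y2)))).coeff n := fun n => congrArg (fun p => Polynomial.coeff p n) hQeq
  have e1eq : (α1:ℂ) = -(x1 + x2 + (y1 + y2) + a) := by
    have := coeffext 4
    simp only [coeff_add, coeff_sub, coeff_C_mul, coeff_X_pow, coeff_X, coeff_C] at this
    norm_num at this
    linear_combination this
  have e4eq : (α4:ℂ) = x1*x2*(y1*y2) + a*(x1*x2*(y1+y2) + y1*y2*(x1+x2)) := by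
    have := coeffext 1
    simp only [coeff_add, coeff_sub, coeff_C_mul, coeff_X_pow, coeff_X, coeff_C] at this
    norm_num at this
    linear_combination this
  have e5eq : (α5:ℂ) = -(a*(x1*x2*(y1*y2))) := by
    have := coeffext 0
    simp only [coeff_add, coeff_sub, coeff_C_mul, coeff_X_pow, coeff_X, coeff_C] at this
    norm_num at this
    linear_combination this
  -- convert to real equations
  have hxsre : x1 + x2 = ((x1 + x2).re : ℂ) := Complex.ext rfl (by simp [hxs])
  have hxpre : x1 * x2 = ((x1 * x2).re : ℂ) := Complex.ext rfl (by simp [hxp])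
  have hysre : y1 + y2 = ((y1 + y2).re : ℂ) := Complex.ext rfl (by simp [hys])
  have hypre : y1 * y2 = ((y1 * y2).re : ℂ) := Complex.ext rfl (by simp [hyp])
  have hare : a = ((a.re : ℝ) : ℂ) := Complex.ext rfl (by simp [haim])
  have r1 : α1 = -((x1+x2).re + (y1+y2).re + a.re) := by
    have : ((α1:ℝ):ℂ) = ((-((x1+x2).re + (y1+y2).re + a.re) : ℝ) : ℂ) := by
      push_cast
      rw [← hxsre, ← hysre, ← hare]
      linear_combination e1eq
    exact_mod_cast this
  have r4 : α4 = (x1*x2).re * (y1*y2).re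
      + a.re * ((x1*x2).re * (y1+y2).re + (y1*y2).re * (x1+x2).re) := by
    have : ((α4:ℝ):ℂ) = (((x1*x2).re * (y1*y2).re
        + a.re * ((x1*x2).re * (y1+y2).re + (y1*y2).re * (x1+x2).re) : ℝ) : ℂ) := by
      push_cast
      rw [← hxsre, ← hxpre, ← hysre, ← hypre, ← hare]
      linear_combination e4eq
    exact_mod_cast this
  have r5 : α5 = -(a.re * ((x1*x2).re * (y1*y2).re)) := by
    have : ((α5:ℝ):ℂ) = ((-(a.re * ((x1*x2).re * (y1*y2).re)) : ℝ) : ℂ) := by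
      push_cast
      rw [← hxpre, ← hypre, ← hare]
      linear_combination e5eq
    exact_mod_cast this
  -- signs
  have hB : (x1 + x2).re < 0 := by simp only [Complex.add_re]; linarith
  have hD : (y1 + y2).re < 0 := by simp only [Complex.add_re]; linarith
  have hC : 0 < (x1 * x2).re := UnstableDeg5Aux.pair_prod_pos hx1 hx2 hxs
  have hE : 0 < (y1 * y2).re := UnstableDeg5Aux.pair_prod_pos hy1 hy2 hys
  have := UnstableDeg5Aux.key_ineq (a1 := α1) (a4 := α4) (a5 := α5) ha hB hD hC hE
    (by linear_combination r1) (by linear_combination r4) (by linear_combination r5)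
  linarith
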